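/- arXiv:1402.0184 — 3 statements merged into one kernel-verified Lean document; each statement's English description precedes it below -/
import Mathlib

section
/- Let K = 𝔽_q((t)) with q a power of a prime p, let ℘(x) = x^p - x, and let 𝔭 be the maximal ideal of 𝔽_q[[t]]. Then 𝔭 ⊆ ℘(K), i.e., every element of 𝔭 is of the form x^p - x for some x ∈ K. -/
open PowerSeries

/-- Coefficients of the `p`-th power of a power series in characteristic `p`. -/
lemma coeff_pow_char {F : Type*} [CommRing F] (p : ℕ) [Fact p.Prime] [CharP F p]
    (φ : PowerSeries F) (n : ℕ) :
    PowerSeries.coeff (R := F) n (φ ^ p) =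
      (if p ∣ n then PowerSeries.coeff (R := F) (n / p) φ else 0) ^ p := by
  set f : Polynomial F := φ.trunc (n + 1) with hf
  have hdvd : (PowerSeries.X : PowerSeries F) ^ (n + 1) ∣ φ - (f : PowerSeries F) := by
    rw [PowerSeries.X_pow_dvd_iff]
    intro m hm
    rw [map_sub, Polynomial.coeff_coe, hf, PowerSeries.coeff_trunc, if_pos hm, sub_self]
  have hdvd2 : (PowerSeries.X : PowerSeries F) ^ (n + 1) ∣ φ ^ p - (f : PowerSeries F) ^ p :=
    hdvd.trans (sub_dvd_pow_sub_pow _ _ p)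
  have h0 : PowerSeries.coeff (R := F) n (φ ^ p - (f : PowerSeries F) ^ p) = 0 :=
    (PowerSeries.X_pow_dvd_iff.mp hdvd2) n (Nat.lt_succ_self n)
  rw [map_sub] at h0
  have h1 : PowerSeries.coeff (R := F) n (φ ^ p) = PowerSeries.coeff (R := F) n ((f : PowerSeries F) ^ p) :=
    sub_eq_zero.mp h0
  have hfp : (f : PowerSeries F) ^ p = ((f ^ p : Polynomial F) : PowerSeries F) := by
    push_cast; ring
  rw [h1, hfp, Polynomial.coeff_coe, ← Polynomial.map_frobenius_expand, Polynomial.coeff_map,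
    Polynomial.coeff_expand (Fact.out : p.Prime).pos]
  have hdivle : n / p < n + 1 := Nat.lt_succ_of_le (Nat.div_le_self n p)
  split_ifs with h
  · rw [frobenius_def, hf, PowerSeries.coeff_trunc, if_pos hdivle]
  · rw [frobenius_def, zero_pow (Fact.out : p.Prime).ne_zero]

/-- The coefficients of a solution of `x ^ p - x = a`, defined recursively. -/
noncomputable def asCoeff {F : Type*} [Field F] (p : ℕ) (hp : 1 < p) (a : ℕ → F) : ℕ → F
  | n =>
    (if h : n ≠ 0 ∧ p ∣ n then (asCoeff p hp a (n / p)) ^ p else 0) - a n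
  decreasing_by exact Nat.div_lt_self (Nat.pos_of_ne_zero h.1) hp

lemma artin_schreier_powerSeries {F : Type*} [Field F] (p : ℕ) [Fact p.Prime] [CharP F p]
    (y : PowerSeries F) (hy : PowerSeries.constantCoeff (R := F) y = 0) :
    ∃ x : PowerSeries F, x ^ p - x = y := by
  have hp : 1 < p := (Fact.out : p.Prime).one_lt
  set c := asCoeff p hp (fun n => PowerSeries.coeff (R := F) n y) with hc
  refine ⟨PowerSeries.mk c, ?_⟩
  ext n
  rw [map_sub, coeff_pow_char]
  simp only [PowerSeries.coeff_mk]
  have hcn : c n = (if h : n ≠ 0 ∧ p ∣ n then (c (n / p)) ^ p else 0)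
      - PowerSeries.coeff (R := F) n y := by
    rw [hc]; rw [asCoeff]
  by_cases hdvd : p ∣ n
  · by_cases hn : n = 0
    · subst hn
      have ha0 : PowerSeries.coeff (R := F) 0 y = 0 := by
        rwa [PowerSeries.coeff_zero_eq_constantCoeff]
      have hc0 : c 0 = 0 := by rw [hcn, dif_neg (by simp), ha0, zero_sub, neg_zero]
      rw [if_pos hdvd, Nat.zero_div, hc0, ha0, zero_pow (Fact.out : p.Prime).ne_zero, sub_zero]
    · rw [if_pos hdvd, hcn, dif_pos ⟨hn, hdvd⟩]
      ring
  · have hn : n ≠ 0 := fun h => hdvd (h ▸ dvd_zero p)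
    rw [if_neg hdvd, hcn, dif_neg (fun h => hdvd h.2),
      zero_pow (Fact.out : p.Prime).ne_zero]
    ring

/-- The maximal ideal `𝔭 = t·𝔽_q[[t]]` of the valuation ring `𝔽_q[[t]]`, viewed as a
subset of the local function field `K = 𝔽_q((t))` (formal Laurent series). -/
def laurentMaximalIdeal (F : Type*) [Field F] : Set (LaurentSeries F) :=
  {x | ∃ y : PowerSeries F, PowerSeries.constantCoeff (R := F) y = 0 ∧
        HahnSeries.ofPowerSeries ℤ F y = x}

/-- For `K = 𝔽_q((t))` (`q` a power of the prime `p`), every element of the maximal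
ideal `𝔭` is of the form `x^p - x` for some `x ∈ K`; that is, `𝔭 ⊆ ℘(K)`. -/
theorem maximalIdeal_subset_artin_schreier_image (p f : ℕ) [Fact p.Prime] [NeZero f] :
    ∀ a ∈ laurentMaximalIdeal (GaloisField p f),
      ∃ x : LaurentSeries (GaloisField p f), x ^ p - x = a := by
  rintro a ⟨y, hy0, rfl⟩
  obtain ⟨x, hx⟩ := artin_schreier_powerSeries p y hy0
  exact ⟨HahnSeries.ofPowerSeries ℤ (GaloisField p f) x, by rw [← map_pow, ← map_sub, hx]⟩
end

section
/- Let K = 𝔽_q((t)) with q = p^f. The quotient group K/℘(K) of the additive group of K by the image of the Artin-Schreier map ℘(x) = x^p - x is a countably infinite group. -/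
/-- The Artin–Schreier map `℘(x) = x^p - x` as an additive group homomorphism on a
commutative ring of characteristic `p`. -/
def artinSchreierHom (K : Type*) [CommRing K] (p : ℕ) [Fact p.Prime] [CharP K p] :
    K →+ K where
  toFun x := x ^ p - x
  map_zero' := by simp [zero_pow (Fact.out (p := p.Prime)).ne_zero]
  map_add' x y := by rw [add_pow_char x y p]; ring

instance (p f : ℕ) [Fact p.Prime] [NeZero f] :
    CharP (LaurentSeries (GaloisField p f)) p :=
  charP_of_injective_ringHom
    (f := (HahnSeries.C : GaloisField p f →+* LaurentSeries (GaloisField p f)))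
    HahnSeries.C_injective p

open LaurentSeries HahnSeries Multiplicative Finset

local notation "ℤₘ₀" => WithZero (Multiplicative ℤ)

section ArtinSchreierAux

variable {F : Type*} [Field F] {p : ℕ} [Fact p.Prime] [CharP (LaurentSeries F) p]

private lemma coe_ofAdd_pow (a : ℤ) (m : ℕ) :
    ((↑(ofAdd a) : ℤₘ₀)) ^ m = ↑(ofAdd ((m : ℤ) * a)) := by
  rw [← WithZero.coe_pow, ← ofAdd_nsmul, nsmul_eq_mul]

private lemma ofAdd_le_ofAdd {a b : ℤ} (h : a ≤ b) :
    ((↑(ofAdd a) : ℤₘ₀)) ≤ ↑(ofAdd b) :=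
  WithZero.coe_le_coe.mpr (Multiplicative.ofAdd_le.mpr h)

private lemma val_pow_le (y : LaurentSeries F) {a : ℤ}
    (h : Valued.v y ≤ (↑(ofAdd a) : ℤₘ₀)) (m : ℕ) :
    Valued.v (y ^ m) ≤ ↑(ofAdd ((m : ℤ) * a)) := by
  rw [map_pow, ← coe_ofAdd_pow]
  exact pow_le_pow_left' h m

private lemma val_le_neg_one {y : LaurentSeries F} (hy : ∀ n : ℤ, n ≤ 0 → y.coeff n = 0) :
    Valued.v y ≤ (↑(ofAdd (-1 : ℤ)) : ℤₘ₀) :=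
  (valuation_le_iff_coeff_lt_eq_zero F (D := 1)).mpr fun n hn => hy n (by omega)

omit [Fact p.Prime] [CharP (LaurentSeries F) p] in
private lemma coeff_pow_eq_zero {y : LaurentSeries F} (hy : ∀ n : ℤ, n ≤ 0 → y.coeff n = 0)
    {k : ℕ} {g : ℤ} (hg : g < (p ^ k : ℕ)) : (y ^ p ^ k).coeff g = 0 := by
  refine coeff_zero_of_lt_valuation F (D := (p ^ k : ℕ)) ?_ hg
  have := val_pow_le y (val_le_neg_one hy) (p ^ k)
  simpa [WithZero.exp] using this

theorem exists_artinSchreier_eq {y : LaurentSeries F}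
    (hy : ∀ n : ℤ, n ≤ 0 → y.coeff n = 0) :
    ∃ x : LaurentSeries F, x ^ p - x = y := by
  classical
  have hp2 : 2 ≤ p := (Fact.out : p.Prime).two_le
  obtain ⟨s, hsAS, hscoeff⟩ : ∃ s : ℕ → LaurentSeries F,
      (∀ N, (s N) ^ p - s N = y - y ^ p ^ N) ∧
      (∀ N (g : ℤ), (s N).coeff g = -∑ k ∈ range N, (y ^ p ^ k).coeff g) := by
    refine ⟨fun N => -∑ k ∈ range N, y ^ p ^ k, fun N => ?_, fun N g => ?_⟩
    · have h1 : (-∑ k ∈ range N, y ^ p ^ k) ^ p = -∑ k ∈ range N, y ^ p ^ (k + 1) := by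
        have h0 : (-∑ k ∈ range N, y ^ p ^ k) ^ p
            = frobenius (LaurentSeries F) p (-∑ k ∈ range N, y ^ p ^ k) := rfl
        rw [h0, map_neg, map_sum]
        congr 1
        refine Finset.sum_congr rfl fun k _ => ?_
        rw [frobenius_def, ← pow_mul, ← pow_succ]
      rw [h1]
      have h2 := Finset.sum_range_sub' (fun k => y ^ p ^ k) N
      simp only [pow_zero, pow_one] at h2
      rw [← h2, Finset.sum_sub_distrib]
      ring
    · simp only [HahnSeries.coeff_neg, neg_inj]
      exact map_sum (HahnSeries.coeff.addMonoidHom g) _ _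
  set z : PowerSeries F := PowerSeries.mk fun n => -∑ k ∈ range n, (y ^ p ^ k).coeff (n : ℤ)
    with hz
  set x : LaurentSeries F := (HahnSeries.ofPowerSeries ℤ F) z with hx
  have hxc : ∀ g : ℤ, x.coeff g =
      if g < 0 then 0 else -∑ k ∈ range g.natAbs, (y ^ p ^ k).coeff g := by
    intro g
    have : x.coeff g = if g < 0 then 0 else PowerSeries.coeff g.natAbs z :=
      PowerSeries.coeff_coe z g
    rw [this]
    split
    · rfl
    · rename_i hg
      rw [hz, PowerSeries.coeff_mk, Int.natAbs_of_nonneg (not_lt.mp hg)]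
  have hclose : ∀ N : ℕ, Valued.v (x - s N) ≤ (↑(ofAdd (-((N : ℤ) + 1))) : ℤₘ₀) := by
    intro N
    refine (valuation_le_iff_coeff_lt_eq_zero F (D := (N : ℤ) + 1)).mpr fun g hg => ?_
    rw [HahnSeries.coeff_sub, hxc g, hscoeff N g]
    by_cases hg0 : g < 0
    · rw [if_pos hg0, zero_sub, neg_neg]
      refine Finset.sum_eq_zero fun k _ => coeff_pow_eq_zero hy ?_
      have : (0 : ℤ) < (p ^ k : ℕ) := by positivity
      omega
    · rw [if_neg hg0]
      push_neg at hg0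
      have hm : g.natAbs ≤ N := by omega
      rw [neg_sub_neg, ← Finset.sum_Ico_eq_sub _ hm]
      refine Finset.sum_eq_zero fun k hk => coeff_pow_eq_zero hy ?_
      have hk1 : g.natAbs ≤ k := (Finset.mem_Ico.mp hk).1
      have h2k : k < 2 ^ k := Nat.lt_two_pow_self
      have hpk : (2 : ℕ) ^ k ≤ p ^ k := Nat.pow_le_pow_left hp2 k
      omega
  have hfinal : ∀ N : ℕ, Valued.v (x ^ p - x - y) ≤ (↑(ofAdd (-((N : ℤ) + 1))) : ℤₘ₀) := by
    intro N
    have key : x ^ p - x - y = (x - s N) ^ p - (x - s N) - y ^ p ^ N := by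
      have h := hsAS N
      rw [sub_pow_char]
      linear_combination h
    rw [key]
    have b1 : Valued.v ((x - s N) ^ p) ≤ (↑(ofAdd (-((N : ℤ) + 1))) : ℤₘ₀) := by
      refine (val_pow_le _ (hclose N) p).trans (ofAdd_le_ofAdd ?_)
      have : (1 : ℤ) ≤ (p : ℤ) := by exact_mod_cast Nat.one_le_of_lt hp2
      nlinarith [Int.natCast_nonneg N]
    have b2 := hclose N
    have b3 : Valued.v (y ^ p ^ N) ≤ (↑(ofAdd (-((N : ℤ) + 1))) : ℤₘ₀) := by
      have h := val_pow_le y (val_le_neg_one hy) (p ^ N)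
      refine h.trans (ofAdd_le_ofAdd ?_)
      have h2k : N < 2 ^ N := Nat.lt_two_pow_self
      have hpk : (2 : ℕ) ^ N ≤ p ^ N := Nat.pow_le_pow_left hp2 N
      have : (N : ℤ) + 1 ≤ (p ^ N : ℕ) := by exact_mod_cast Nat.succ_le_of_lt (lt_of_lt_of_le h2k hpk)
      omega
    calc Valued.v ((x - s N) ^ p - (x - s N) - y ^ p ^ N)
        ≤ max (Valued.v ((x - s N) ^ p - (x - s N))) (Valued.v (y ^ p ^ N)) :=
          Valuation.map_sub _ _ _
      _ ≤ max (max (Valued.v ((x - s N) ^ p)) (Valued.v (x - s N))) (Valued.v (y ^ p ^ N)) :=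
          max_le_max (Valuation.map_sub _ _ _) le_rfl
      _ ≤ (↑(ofAdd (-((N : ℤ) + 1))) : ℤₘ₀) := max_le (max_le b1 b2) b3
  refine ⟨x, sub_eq_zero.mp ?_⟩
  have hc : ∀ g : ℤ, (x ^ p - x - y).coeff g = 0 := by
    intro g
    refine coeff_zero_of_lt_valuation F (hfinal g.natAbs) ?_
    omega
  exact HahnSeries.ext (funext fun g => by rw [hc g]; rfl)

end ArtinSchreierAux

/-- For `K = 𝔽_q((t))` with `q = p^f`, the quotient `K/℘(K)` of the additive group of
`K` by the image of the Artin–Schreier map `℘(x) = x^p - x` is countably infinite. -/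
theorem artin_schreier_quotient_countably_infinite (p f : ℕ) [Fact p.Prime] [NeZero f] :
    Countable (LaurentSeries (GaloisField p f) ⧸
        (artinSchreierHom (LaurentSeries (GaloisField p f)) p).range) ∧
      Infinite (LaurentSeries (GaloisField p f) ⧸
        (artinSchreierHom (LaurentSeries (GaloisField p f)) p).range) := by
  classical
  have hp2 : 2 ≤ p := (Fact.out : p.Prime).two_le
  set F := GaloisField p f with hF
  set K := LaurentSeries F with hK
  set G := (artinSchreierHom K p).range with hG
  constructor
  · -- countable
    refine Function.Surjective.countable (f := fun d : ℤ →₀ F =>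
      (QuotientAddGroup.mk (d.sum fun n a => HahnSeries.single n a) : K ⧸ G)) ?_
    intro q
    obtain ⟨x, rfl⟩ := QuotientAddGroup.mk_surjective q
    have hT : (x.support ∩ Set.Iic 0).Finite := by
      refine (Set.finite_Icc x.order 0).subset ?_
      rintro n ⟨hn1, hn2⟩
      exact ⟨le_of_not_gt fun h => hn1 (HahnSeries.coeff_eq_zero_of_lt_order h), hn2⟩
    set d : ℤ →₀ F := Finsupp.onFinset hT.toFinset (fun n => if n ≤ 0 then x.coeff n else 0)
      (fun n hn => by
        rw [Set.Finite.mem_toFinset]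
        change (if n ≤ 0 then x.coeff n else 0) ≠ 0 at hn
        by_cases h : n ≤ 0
        · rw [if_pos h] at hn
          exact ⟨hn, h⟩
        · rw [if_neg h] at hn
          exact absurd rfl hn) with hd
    set w : K := d.sum fun n a => HahnSeries.single n a with hw
    have hwc : ∀ g : ℤ, w.coeff g = d g := by
      intro g
      rw [hw, Finsupp.sum]
      rw [show (∑ n ∈ d.support, (HahnSeries.single n (d n) : K)).coeff g
          = ∑ n ∈ d.support, (HahnSeries.single n (d n) : K).coeff g from
        map_sum (HahnSeries.coeff.addMonoidHom g) _ _]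
      classical
      rw [show (∑ n ∈ d.support, (HahnSeries.single n (d n) : K).coeff g)
          = ∑ n ∈ d.support, if g = n then d n else 0 from
        Finset.sum_congr rfl fun n _ => by rw [HahnSeries.coeff_single]; congr 1]
      rw [Finset.sum_ite_eq d.support g d]
      split
      · rfl
      · rename_i h
        exact (Finsupp.notMem_support_iff.mp h).symm
    have hmem : x - w ∈ G := by
      obtain ⟨u, hu⟩ := exists_artinSchreier_eq (p := p) (y := x - w)
        (fun n hn => by
          rw [HahnSeries.coeff_sub, hwc]
          simp [hd, Finsupp.onFinset_apply, hn])
      exact ⟨u, hu⟩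
    refine ⟨d, ?_⟩
    exact (QuotientAddGroup.eq_iff_sub_mem).mpr (by simpa using neg_mem hmem)
  · -- infinite
    have aux : ∀ A B : ℤ, 0 < B → B < A → ¬ ((p : ℤ) ∣ A) →
        (HahnSeries.single (-A) (1 : F) : K) - HahnSeries.single (-B) 1 ∉ G := by
      rintro A B hB hBA hpA ⟨u, hu⟩
      have hu' : u ^ p - u = (HahnSeries.single (-A) (1 : F) : K) - HahnSeries.single (-B) 1 := hu
      have ha : Valued.v ((HahnSeries.single (-A) (1 : F) : K) - HahnSeries.single (-B) 1)
          = (↑(Multiplicative.ofAdd A) : ℤₘ₀) := by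
        rw [Valuation.map_sub_eq_of_lt_left]
        · rw [LaurentSeries.valuation_single_zpow, neg_neg]; rfl
        · rw [LaurentSeries.valuation_single_zpow, LaurentSeries.valuation_single_zpow,
            neg_neg, neg_neg]
          exact WithZero.coe_lt_coe.mpr (Multiplicative.ofAdd_lt.mpr hBA)
      rw [← hu'] at ha
      rcases eq_or_ne (Valued.v u) 0 with hvu | hvu
      · rw [Valuation.zero_iff] at hvu
        rw [hvu, zero_pow (Fact.out (p := p.Prime)).ne_zero, sub_zero, map_zero] at ha
        exact WithZero.zero_ne_coe ha
      · obtain ⟨γ, hγ⟩ := WithZero.ne_zero_iff_exists.mp hvu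
        set g : ℤ := Multiplicative.toAdd γ with hg'
        have hvug : Valued.v u = (↑(Multiplicative.ofAdd g) : ℤₘ₀) := by
          rw [← hγ, hg', ofAdd_toAdd]
        have hvup : Valued.v (u ^ p) = (↑(Multiplicative.ofAdd ((p : ℤ) * g)) : ℤₘ₀) := by
          rw [map_pow, hvug, coe_ofAdd_pow]
        rcases lt_or_ge 0 g with hgpos | hgle
        · have hlt : Valued.v u < Valued.v (u ^ p) := by
            rw [hvug, hvup]
            exact WithZero.coe_lt_coe.mpr (Multiplicative.ofAdd_lt.mpr (by nlinarith))
          have : Valued.v (u ^ p - u) = Valued.v (u ^ p) := Valuation.map_sub_eq_of_lt_left _ hlt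
          rw [this, hvup] at ha
          have hA : (p : ℤ) * g = A := by
            have := WithZero.coe_inj.mp ha
            exact_mod_cast Multiplicative.ofAdd.injective this
          exact hpA ⟨g, hA.symm⟩
        · have h1 : Valued.v (u ^ p - u) ≤ (↑(Multiplicative.ofAdd (0 : ℤ)) : ℤₘ₀) := by
            refine (Valuation.map_sub _ _ _).trans (max_le ?_ ?_)
            · rw [hvup]
              exact ofAdd_le_ofAdd (by nlinarith)
            · rw [hvug]
              exact ofAdd_le_ofAdd hgle
          rw [ha] at h1
          have : A ≤ 0 := Multiplicative.ofAdd_le.mp (WithZero.coe_le_coe.mp h1)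
          omega
    refine Infinite.of_injective
      (fun n : ℕ => (QuotientAddGroup.mk (HahnSeries.single (-((p : ℤ) * n + 1)) (1 : F)) : K ⧸ G))
      ?_
    have hnd : ∀ m : ℕ, ¬ ((p : ℤ) ∣ (p : ℤ) * m + 1) := by
      intro m hdvd
      have h1 : (p : ℤ) ∣ 1 := (dvd_add_right (dvd_mul_right _ _)).mp hdvd
      have h2 := Int.le_of_dvd one_pos h1
      omega
    intro n m hnm
    by_contra hne
    have hsub := (QuotientAddGroup.eq_iff_sub_mem).mp hnm
    rcases lt_or_gt_of_ne hne with h | h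
    · refine aux ((p : ℤ) * m + 1) ((p : ℤ) * n + 1) (by positivity) ?_ (hnd m) ?_
      · have h' : (n : ℤ) < m := by exact_mod_cast h
        have hp' : (2 : ℤ) ≤ p := by exact_mod_cast hp2
        nlinarith
      · have h3 := neg_mem hsub
        rw [neg_sub] at h3
        exact h3
    · refine aux ((p : ℤ) * n + 1) ((p : ℤ) * m + 1) (by positivity) ?_ (hnd n) hsub
      · have h' : (m : ℤ) < n := by exact_mod_cast h
        have hp' : (2 : ℤ) ≤ p := by exact_mod_cast hp2
        nlinarith
end

section
/- Let K = 𝔽_q((t)) with q = p^f, p prime. Then the quotient group K^×/(K^×)^p of the multiplicative group by the subgroup of p-th powers is infinite. -/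
open PowerSeries

/-- For `K = 𝔽_q((t))` with `q = p^f`, `p` prime, the quotient `K^×/(K^×)^p` of the
multiplicative group of `K` by the subgroup of `p`-th powers is infinite. -/
theorem units_mod_pth_powers_infinite (p f : ℕ) [Fact p.Prime] [NeZero f] :
    Infinite ((LaurentSeries (GaloisField p f))ˣ ⧸
      (powMonoidHom (α := (LaurentSeries (GaloisField p f))ˣ) p).range) := by
  set F := GaloisField p f with hF
  have hp : p ≠ 0 := (Fact.out (p := p.Prime)).ne_zero
  have hpF : (p : F) = 0 := CharP.cast_eq_zero F p
  have hpPS : ((p : ℕ) : F⟦X⟧) = 0 := by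
    rw [← map_natCast (C (R := F)) p, hpF, map_zero]
  -- the power series 1 + X^(n*p+1) and corresponding Laurent series
  set E : ℕ → F⟦X⟧ := fun n => 1 + X ^ (n * p + 1) with hE
  set e : ℕ → LaurentSeries F := fun n => HahnSeries.ofPowerSeries ℤ F (E n) with he
  have he' : ∀ n, e n = 1 + HahnSeries.single ((n * p + 1 : ℕ) : ℤ) 1 := by
    intro n
    rw [he, hE]
    simp only [map_add, map_one, HahnSeries.ofPowerSeries_X_pow]
  have hcoeff0 : ∀ n, (e n).coeff 0 = 1 := by
    intro n
    have hne0 : ((n * p + 1 : ℕ) : ℤ) ≠ 0 := by exact_mod_cast Nat.succ_ne_zero (n * p)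
    rw [he' n]
    simp only [HahnSeries.coeff_add, HahnSeries.coeff_one, HahnSeries.coeff_single]
    rw [if_neg (Ne.symm hne0), add_zero, if_pos trivial]
  have hne : ∀ n, e n ≠ 0 := by
    intro n h0
    have := hcoeff0 n
    rw [h0] at this
    simp at this
  have hord : ∀ n, (e n).order = 0 := by
    intro n
    refine le_antisymm (HahnSeries.order_le_of_coeff_ne_zero (by rw [hcoeff0 n]; exact one_ne_zero)) ?_
    by_contra h
    push_neg at h
    have hcoeff := mt HahnSeries.coeff_order_eq_zero.mp (hne n)
    apply hcoeff
    set o := (e n).order with ho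
    have ho1 : o ≠ 0 := ne_of_lt h
    have ho2 : o ≠ ((n * p + 1 : ℕ) : ℤ) := by
      intro hcon
      rw [hcon] at h
      exact absurd h (by exact_mod_cast not_lt.mpr (Nat.zero_le _))
    rw [he' n]
    simp only [HahnSeries.coeff_add, HahnSeries.coeff_one, HahnSeries.coeff_single]
    rw [if_neg ho1, if_neg ho2, add_zero]
  -- units
  set U : ℕ → (LaurentSeries F)ˣ := fun n => Units.mk0 (e n) (hne n) with hU
  apply Infinite.of_injective
    (fun n : ℕ => (QuotientGroup.mk (U n) :
      (LaurentSeries F)ˣ ⧸ (powMonoidHom (α := (LaurentSeries F)ˣ) p).range))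
  intro a b hab
  simp only [QuotientGroup.eq] at hab
  obtain ⟨g, hg⟩ := hab
  -- hg : powMonoidHom p g = (U a)⁻¹ * U b
  have hg' : (U a : LaurentSeries F) * (g : LaurentSeries F) ^ p = U b := by
    have : (U a) * (g ^ p) = U b := by
      rw [powMonoidHom_apply] at hg
      rw [hg, mul_inv_cancel_left]
    exact_mod_cast congrArg Units.val this
  set G : LaurentSeries F := (g : LaurentSeries F) with hGdef
  have hG : G ≠ 0 := g.ne_zero
  have key : e a * G ^ p = e b := hg'
  -- order of G is zero
  have hordG : G.order = 0 := by
    have h1 : (e a).order + (G ^ p).order = (e b).order := by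
      rw [← HahnSeries.order_mul (hne a) (pow_ne_zero _ hG), key]
    rw [hord a, hord b, zero_add, HahnSeries.order_pow] at h1
    have := mul_eq_zero.mp (by rwa [nsmul_eq_mul] at h1)
    rcases this with h | h
    · exact absurd (Nat.cast_eq_zero.mp h) hp
    · exact h
  -- G comes from a power series P with nonzero constant coefficient
  set P : F⟦X⟧ := G.powerSeriesPart with hPdef
  have hGP : (HahnSeries.ofPowerSeries ℤ F) P = G := by
    have h := G.single_order_mul_powerSeriesPart
    rwa [hordG, HahnSeries.single_zero_one, one_mul] at h
  have hP0 : constantCoeff P ≠ 0 := by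
    have h := mt HahnSeries.coeff_order_eq_zero.mp hG
    rw [← PowerSeries.coeff_zero_eq_constantCoeff, G.powerSeriesPart_coeff 0]
    simpa using h
  -- move the equation to power series
  have hEq : E a * P ^ p = E b := by
    apply HahnSeries.ofPowerSeries_injective (Γ := ℤ)
    rw [map_mul, map_pow, hGP]
    exact key
  -- differentiate
  have hdE : ∀ n : ℕ, d⁄dX F (E n) = X ^ (n * p) := by
    intro n
    rw [hE]
    simp only [map_add, Derivation.map_one_eq_zero, zero_add, Derivation.leibniz_pow,
      derivative_X, Nat.add_sub_cancel, smul_eq_mul, mul_one, nsmul_eq_mul]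
    push_cast
    rw [hpPS]
    ring
  have hdP : d⁄dX F (P ^ p) = 0 := by
    rw [Derivation.leibniz_pow, nsmul_eq_mul, hpPS, zero_mul]
  have hfinal : P ^ p * X ^ (a * p) = X ^ (b * p) := by
    have h := congrArg (d⁄dX F) hEq
    rw [Derivation.leibniz, hdP, smul_zero, zero_add, hdE a, hdE b, smul_eq_mul] at h
    exact h
  -- compare orders
  have hPp : (P ^ p).order = 0 := by
    refine le_antisymm (PowerSeries.order_le 0 ?_) zero_le
    rw [PowerSeries.coeff_zero_eq_constantCoeff, map_pow]
    exact pow_ne_zero _ hP0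
  have horder := congrArg PowerSeries.order hfinal
  rw [PowerSeries.order_mul, hPp, zero_add, PowerSeries.order_X_pow, PowerSeries.order_X_pow]
    at horder
  have hmn : a * p = b * p := by exact_mod_cast horder
  exact Nat.eq_of_mul_eq_mul_right (Nat.pos_of_ne_zero hp) hmn
end
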